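/- Fix ε ∈ (0, 1) small and let ρ be uniform on [0, 1). For positive reals p_i > p_j, let p̄_i, p̄_j be their randomized roundings to the grid {(1+ε)^{ρ+t} : t ∈ ℤ}. Then E[|p̄_i − p̄_j|] = Θ(1) · |p_i − p_j|; in particular (1/3)|p_i − p_j| ≤ E[|p̄_i − p̄_j|] ≤ C·|p_i − p_j| for a universal constant C (e.g., C = (1+ε)²·(ε/ln(1+ε)) suffices for the upper bound up to constants). -/

import Mathlib

open MeasureTheory

/-- Randomized geometric rounding with offset `ρ`: the smallest number of the form
`(1+ε)^(ρ+t)`, `t ∈ ℤ`, that is at least `x`. -/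
noncomputable def geomRound (ε ρ x : ℝ) : ℝ :=
  (1 + ε) ^ ((ρ + (⌈Real.logb (1 + ε) x - ρ⌉ : ℤ) : ℝ))

lemma geomRound_eq {ε : ℝ} (hε : 0 < ε) {p : ℝ} (hp : 0 < p) (ρ : ℝ) :
    geomRound ε ρ p = p * (1 + ε) ^ Int.fract (ρ - Real.logb (1 + ε) p) := by
  have hb : (0:ℝ) < 1 + ε := by linarith
  have hb1 : (1:ℝ) + ε ≠ 1 := by linarith
  set L := Real.logb (1 + ε) p with hL
  have hceil : ((⌈L - ρ⌉ : ℤ) : ℝ) = -((⌊ρ - L⌋ : ℤ) : ℝ) := by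
    rw [show L - ρ = -(ρ - L) by ring, Int.ceil_neg]
    push_cast
    ring
  have hexp : ρ + ((⌈L - ρ⌉ : ℤ) : ℝ) = L + Int.fract (ρ - L) := by
    rw [hceil, Int.fract]
    ring
  rw [geomRound, ← hL, hexp, Real.rpow_add hb, Real.rpow_logb hb hb1 hp]

lemma integrableOn_key {b : ℝ} (hb : 1 < b) (L : ℝ) :
    IntegrableOn (fun ρ : ℝ => b ^ Int.fract (ρ - L)) (Set.Ico (0:ℝ) 1) := by
  have h0 : (0:ℝ) < b := lt_trans one_pos hb
  have hmeas : Measurable (fun ρ : ℝ => b ^ Int.fract (ρ - L)) := by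
    have : (fun ρ : ℝ => b ^ Int.fract (ρ - L))
        = fun ρ : ℝ => Real.exp (Real.log b * Int.fract (ρ - L)) := by
      funext ρ; rw [Real.rpow_def_of_pos h0]
    rw [this]
    exact Real.measurable_exp.comp
      (measurable_const.mul ((measurable_id.sub_const L).fract))
  have hconst : IntegrableOn (fun _ : ℝ => b) (Set.Ico (0:ℝ) 1) := by
    refine integrableOn_const (hs := ?_)
    simp [Real.volume_Ico]
  refine hconst.mono' hmeas.aestronglyMeasurable ?_
  filter_upwards with ρ
  rw [Real.norm_eq_abs, abs_of_nonneg (Real.rpow_nonneg h0.le _)]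
  calc b ^ Int.fract (ρ - L) ≤ b ^ (1:ℝ) :=
        Real.rpow_le_rpow_of_exponent_le hb.le (Int.fract_lt_one _).le
    _ = b := Real.rpow_one b

lemma key_integral {b : ℝ} (hb : 1 < b) (L : ℝ) :
    ∫ ρ in Set.Ico (0:ℝ) 1, b ^ Int.fract (ρ - L) = (b - 1) / Real.log b := by
  have h0 : (0:ℝ) < b := lt_trans one_pos hb
  have hlog : 0 < Real.log b := Real.log_pos hb
  have hIco : ∫ ρ in Set.Ico (0:ℝ) 1, b ^ Int.fract (ρ - L)
      = ∫ ρ in (0:ℝ)..1, b ^ Int.fract (ρ - L) := by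
    rw [intervalIntegral.integral_of_le zero_le_one,
      integral_Ico_eq_integral_Ioo, integral_Ioc_eq_integral_Ioo]
  have hper : Function.Periodic (fun u : ℝ => b ^ Int.fract u) 1 := by
    intro u; simp [Int.fract_add_one]
  have hshift : ∫ ρ in (0:ℝ)..1, b ^ Int.fract (ρ - L)
      = ∫ u in (0:ℝ)..1, b ^ Int.fract u := by
    rw [intervalIntegral.integral_comp_sub_right (fun u => b ^ Int.fract u) L]
    have h2 := hper.intervalIntegral_add_eq (0 - L) 0
    norm_num at h2 ⊢
    convert h2 using 2
    ring
  have hid : ∫ u in (0:ℝ)..1, b ^ Int.fract u = ∫ u in (0:ℝ)..1, b ^ u := by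
    rw [intervalIntegral.integral_of_le zero_le_one,
      intervalIntegral.integral_of_le zero_le_one,
      integral_Ioc_eq_integral_Ioo, integral_Ioc_eq_integral_Ioo]
    apply setIntegral_congr_fun measurableSet_Ioo
    intro u hu
    simp only []
    rw [Int.fract_eq_self.2 ⟨hu.1.le, hu.2⟩]
  have hexp : ∫ u in (0:ℝ)..1, b ^ u = (b - 1) / Real.log b := by
    have : (fun u : ℝ => b ^ u) = fun u : ℝ => Real.exp (u * Real.log b) := by
      funext u; rw [Real.rpow_def_of_pos h0, mul_comm]
    rw [this]
    rw [intervalIntegral.integral_comp_mul_right Real.exp hlog.ne']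
    simp [Real.exp_log h0, smul_eq_mul]
    ring
  rw [hIco, hshift, hid, hexp]

lemma integrableOn_geomRound {ε : ℝ} (hε : 0 < ε) {p : ℝ} (hp : 0 < p) :
    IntegrableOn (fun ρ : ℝ => geomRound ε ρ p) (Set.Ico (0:ℝ) 1) := by
  have hb : (1:ℝ) < 1 + ε := by linarith
  have : (fun ρ : ℝ => geomRound ε ρ p)
      = fun ρ : ℝ => p * (1 + ε) ^ Int.fract (ρ - Real.logb (1 + ε) p) := by
    funext ρ; exact geomRound_eq hε hp ρ
  rw [this]
  exact (integrableOn_key hb _).const_mul p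

lemma integral_geomRound {ε : ℝ} (hε : 0 < ε) {p : ℝ} (hp : 0 < p) :
    ∫ ρ in Set.Ico (0:ℝ) 1, geomRound ε ρ p = p * (ε / Real.log (1 + ε)) := by
  have hb : (1:ℝ) < 1 + ε := by linarith
  have h1 : ∫ ρ in Set.Ico (0:ℝ) 1, geomRound ε ρ p
      = ∫ ρ in Set.Ico (0:ℝ) 1, p * (1 + ε) ^ Int.fract (ρ - Real.logb (1 + ε) p) := by
    apply setIntegral_congr_fun measurableSet_Ico
    intro ρ _
    exact geomRound_eq hε hp ρ
  rw [h1, integral_const_mul, key_integral hb]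
  norm_num

lemma geomRound_mono {ε : ℝ} (hε : 0 < ε) {p q : ℝ} (hq : 0 < q) (hpq : q ≤ p) (ρ : ℝ) :
    geomRound ε ρ q ≤ geomRound ε ρ p := by
  have hb : (1:ℝ) < 1 + ε := by linarith
  apply Real.rpow_le_rpow_of_exponent_le hb.le
  have hlog : Real.logb (1 + ε) q ≤ Real.logb (1 + ε) p :=
    Real.logb_le_logb_of_le hb hq hpq
  have hceil := Int.ceil_le_ceil (R := ℝ) (sub_le_sub_right hlog ρ)
  have : ((⌈Real.logb (1 + ε) q - ρ⌉ : ℤ) : ℝ) ≤ ((⌈Real.logb (1 + ε) p - ρ⌉ : ℤ) : ℝ) :=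
    Int.cast_le.2 hceil
  linarith

/-- With `ρ` uniform on `[0,1)`, the expected rounded gap `E|p̄_i − p̄_j|` is within
constant factors of `|p_i − p_j|`: at least `(1/3)|p_i − p_j|`, and at most a
universal constant times `|p_i − p_j|`, for all small enough `ε`. -/

theorem expected_rounded_gap_comparable :
    ∃ C : ℝ, 0 < C ∧ ∃ ε₀ : ℝ, 0 < ε₀ ∧
      ∀ ε : ℝ, ε ∈ Set.Ioo (0 : ℝ) ε₀ →
        ∀ pi pj : ℝ, 0 < pj → pj < pi →
          (1 / 3) * |pi - pj| ≤
              ∫ ρ in Set.Ico (0 : ℝ) 1, |geomRound ε ρ pi - geomRound ε ρ pj| ∧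
            ∫ ρ in Set.Ico (0 : ℝ) 1, |geomRound ε ρ pi - geomRound ε ρ pj| ≤
              C * |pi - pj| := by
  refine ⟨2, by norm_num, 1, by norm_num, ?_⟩
  rintro ε ⟨hε0, hε1⟩ pi pj hpj hji
  have hpi : 0 < pi := hpj.trans hji
  have hb : (1:ℝ) < 1 + ε := by linarith
  have hlog : 0 < Real.log (1 + ε) := Real.log_pos hb
  -- remove the absolute value
  have habs : ∫ ρ in Set.Ico (0:ℝ) 1, |geomRound ε ρ pi - geomRound ε ρ pj|
      = ∫ ρ in Set.Ico (0:ℝ) 1, (geomRound ε ρ pi - geomRound ε ρ pj) := by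
    apply setIntegral_congr_fun measurableSet_Ico
    intro ρ _
    exact abs_of_nonneg (sub_nonneg.2 (geomRound_mono hε0 hpj hji.le ρ))
  have hsub : ∫ ρ in Set.Ico (0:ℝ) 1, (geomRound ε ρ pi - geomRound ε ρ pj)
      = (pi - pj) * (ε / Real.log (1 + ε)) := by
    rw [integral_sub (integrableOn_geomRound hε0 hpi) (integrableOn_geomRound hε0 hpj),
      integral_geomRound hε0 hpi, integral_geomRound hε0 hpj]
    ring
  rw [habs, hsub, abs_of_pos (sub_pos.2 hji)]
  -- bounds on the ratio ε / log(1+ε)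
  have hle : Real.log (1 + ε) ≤ ε := by
    have := Real.log_le_sub_one_of_pos (by linarith : (0:ℝ) < 1 + ε)
    linarith
  have hge : ε / 2 ≤ Real.log (1 + ε) := by
    rw [Real.le_log_iff_exp_le (by linarith : (0:ℝ) < 1 + ε)]
    have h1 : 1 - ε / 2 ≤ Real.exp (-(ε / 2)) := by
      have := Real.add_one_le_exp (-(ε / 2))
      linarith
    have h2 : 0 < 1 - ε / 2 := by linarith
    have h3 : Real.exp (ε / 2) * Real.exp (-(ε / 2)) = 1 := by
      rw [← Real.exp_add]; norm_num
    nlinarith [Real.exp_pos (ε / 2)]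
  have hr1 : 1 ≤ ε / Real.log (1 + ε) := (one_le_div hlog).2 hle
  have hr2 : ε / Real.log (1 + ε) ≤ 2 := by
    rw [div_le_iff₀ hlog]; linarith
  have hd : 0 < pi - pj := sub_pos.2 hji
  constructor
  · nlinarith
  · nlinarith
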